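/- Let M be a positive integer and f : ℤ → ℂ an even M-periodic function (f(-n) = f(n)). Define θ(τ; f) := f(0) + 2·Θ(τ; 0, f, M) for τ ∈ ℍ. Then for every τ ∈ ℍ: θ(τ; f) = (τ/i)^{-1/2} · θ(-1/τ; U_M f), where U_M f is the discrete Fourier transform of f (an even M-periodic function) and (τ/i)^{-1/2} is the principal branch. -/

import Mathlib

open Complex

/-- The partial theta series `Θ(τ; ν, f, M) = Σ_{n≥1} n^ν f(n) e^{iπn²τ/M}`. -/
noncomputable def theta (M : ℕ) (ν : ℕ) (f : ℤ → ℂ) (τ : ℂ) : ℂ :=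
  ∑' n : ℕ, ((n : ℂ) + 1) ^ ν * f (n + 1) *
    Complex.exp (Real.pi * Complex.I * ((n : ℂ) + 1) ^ 2 * τ / M)

/-- The discrete Fourier transform `U_M f` of an `M`-periodic function `f : ℤ → ℂ`. -/
noncomputable def dft (M : ℕ) (f : ℤ → ℂ) (n : ℤ) : ℂ :=
  (Real.sqrt M : ℂ)⁻¹ * ∑ ℓ ∈ Finset.range M, f ℓ *
    Complex.exp (-2 * Real.pi * Complex.I * ℓ * n / M)

open Real in
private lemma per_int {M : ℕ} {g : ℤ → ℂ} (hg : ∀ n : ℤ, g (n + M) = g n) :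
    ∀ (n k : ℤ), g (n + M * k) = g n := by
  intro n k
  induction k using Int.induction_on with
  | zero => simp
  | succ k ih => rw [show n + (M : ℤ) * ((k : ℤ) + 1) = (n + M * k) + M by ring, hg, ih]
  | pred k ih =>
      have h := hg (n + M * (-(k : ℤ) - 1))
      rw [show n + (M : ℤ) * (-(k : ℤ) - 1) + M = n + M * (-(k : ℤ)) by ring] at h
      rw [← h]; exact ih

private lemma bounded_per {M : ℕ} (hM : 0 < M) {g : ℤ → ℂ} (hg : ∀ n : ℤ, g (n + M) = g n) :
    ∀ n : ℤ, ‖g n‖ ≤ ∑ ℓ ∈ Finset.range M, ‖g ℓ‖ := by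
  intro n
  have hM' : (M : ℤ) ≠ 0 := by exact_mod_cast hM.ne'
  have h0 : 0 ≤ n % (M : ℤ) := Int.emod_nonneg n hM'
  have h1 : n % (M : ℤ) < M := Int.emod_lt_of_pos n (by exact_mod_cast hM)
  have h2 : g n = g ((n % (M : ℤ)).toNat) := by
    have h3 := per_int hg (n % (M : ℤ)) (n / M)
    rw [Int.emod_add_mul_ediv n M] at h3
    rw [Int.toNat_of_nonneg h0]; exact h3
  rw [h2]
  exact Finset.single_le_sum (f := fun ℓ : ℕ => ‖g ℓ‖) (fun i _ => norm_nonneg _)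
    (Finset.mem_range.mpr (by omega))

private def finIntEquiv (M : ℕ) (hM : 0 < M) : Fin M × ℤ ≃ ℤ where
  toFun p := ((p.1 : ℕ) : ℤ) + M * p.2
  invFun n := (⟨(n % (M : ℤ)).toNat, by
      have h0 : 0 ≤ n % (M : ℤ) := Int.emod_nonneg n (by exact_mod_cast hM.ne')
      have h1 : n % (M : ℤ) < M := Int.emod_lt_of_pos n (by exact_mod_cast hM)
      omega⟩, n / M)
  left_inv := by
    rintro ⟨ℓ, k⟩
    have hM' : (M : ℤ) ≠ 0 := by exact_mod_cast hM.ne'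
    have hℓ0 : (0 : ℤ) ≤ (ℓ : ℕ) := Int.natCast_nonneg _
    have hℓ1 : ((ℓ : ℕ) : ℤ) < M := by exact_mod_cast ℓ.isLt
    have hm : (((ℓ : ℕ) : ℤ) + M * k) % M = ((ℓ : ℕ) : ℤ) := by
      rw [Int.add_mul_emod_self_left, Int.emod_eq_of_lt hℓ0 hℓ1]
    have hd : (((ℓ : ℕ) : ℤ) + M * k) / M = k := by
      rw [Int.add_mul_ediv_left _ _ hM', Int.ediv_eq_zero_of_lt hℓ0 hℓ1, zero_add]
    refine Prod.ext ?_ ?_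
    · ext; simp [hm]
    · simpa using hd
  right_inv := fun n => by
    have h0 : 0 ≤ n % (M : ℤ) := Int.emod_nonneg n (by exact_mod_cast hM.ne')
    simp only
    rw [Int.toNat_of_nonneg h0]
    exact Int.emod_add_mul_ediv n M

open Real in
private lemma summable_F (M : ℕ) (hM : 0 < M) {g : ℤ → ℂ} (hg : ∀ n : ℤ, g (n + M) = g n)
    {t : ℂ} (ht : 0 < t.im) :
    Summable fun n : ℤ => g n * Complex.exp (π * I * (n : ℂ) ^ 2 * t / M) := by
  have h1 : Summable fun n : ℤ => jacobiTheta₂_term n 0 (t / M) :=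
    (summable_jacobiTheta₂_term_iff 0 (t / M)).mpr
      (by rw [div_natCast_im]; exact div_pos ht (by exact_mod_cast hM))
  refine Summable.of_norm_bounded
      (g := fun n => (∑ ℓ ∈ Finset.range M, ‖g ℓ‖) * ‖jacobiTheta₂_term n 0 (t / M)‖)
      (h1.norm.mul_left _) (fun n => ?_)
  have h2 : Complex.exp (π * I * (n : ℂ) ^ 2 * t / M) = jacobiTheta₂_term n 0 (t / M) := by
    simp only [jacobiTheta₂_term]; congr 1; ring
  rw [norm_mul, h2]
  exact mul_le_mul_of_nonneg_right (bounded_per hM hg n) (norm_nonneg _)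

set_option maxHeartbeats 1000000 in
open Real in
private lemma theta_eq_tsum (M : ℕ) (g : ℤ → ℂ) (heven : ∀ n : ℤ, g (-n) = g n) {t : ℂ}
    (hs : Summable fun n : ℤ => g n * Complex.exp (π * I * (n : ℂ) ^ 2 * t / M)) :
    g 0 + 2 * theta M 0 g t = ∑' n : ℤ, g n * Complex.exp (π * I * (n : ℂ) ^ 2 * t / M) := by
  set F : ℤ → ℂ := fun n => g n * Complex.exp (π * I * (n : ℂ) ^ 2 * t / M) with hF
  have hs1 : Summable fun n : ℕ => F n := hs.comp_injective Nat.cast_injective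
  have hs2 : Summable fun n : ℕ => F (-(n + 1)) :=
    hs.comp_injective (fun a b h => by omega)
  rw [tsum_of_nat_of_neg_add_one hs1 hs2]
  have e1 : ∀ n : ℕ, F (-((n : ℤ) + 1)) = F ((n : ℤ) + 1) := by
    intro n
    simp only [hF]
    rw [heven]
    congr 2
    push_cast
    ring
  have e2 : ∑' n : ℕ, F (-((n : ℤ) + 1)) = ∑' n : ℕ, F ((n : ℤ) + 1) := tsum_congr e1
  have e3 : (∑' n : ℕ, F (n : ℤ)) = F 0 + ∑' n : ℕ, F ((n : ℤ) + 1) := by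
    rw [Summable.tsum_eq_zero_add hs1,
      show F ((0 : ℕ) : ℤ) = F 0 from congrArg F (by norm_num)]
    exact congrArg (fun x => F 0 + x)
      (tsum_congr fun n => congrArg F (by push_cast; ring))
  have e4 : theta M 0 g t = ∑' n : ℕ, F ((n : ℤ) + 1) := by
    refine tsum_congr fun n => ?_
    simp only [hF, pow_zero, one_mul]
    congr 2
    push_cast
    ring
  have e5 : F 0 = g 0 := by simp [hF]
  rw [e2, e3, e4, e5]
  ring

set_option maxHeartbeats 1000000 in
open Real in
private lemma tsum_eq_finsum_theta (M : ℕ) (hM : 0 < M) (g : ℤ → ℂ)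
    (hg : ∀ n : ℤ, g (n + M) = g n) {t : ℂ}
    (hs : Summable fun n : ℤ => g n * Complex.exp (π * I * (n : ℂ) ^ 2 * t / M)) :
    ∑' n : ℤ, g n * Complex.exp (π * I * (n : ℂ) ^ 2 * t / M)
      = ∑ ℓ ∈ Finset.range M, g ℓ * Complex.exp (π * I * (ℓ : ℂ) ^ 2 * t / M) *
          jacobiTheta₂ ((ℓ : ℂ) * t) (M * t) := by
  have hM0 : (M : ℂ) ≠ 0 := Nat.cast_ne_zero.mpr hM.ne'
  set F : ℤ → ℂ := fun n => g n * Complex.exp (π * I * (n : ℂ) ^ 2 * t / M) with hF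
  rw [← Equiv.tsum_eq (finIntEquiv M hM) F]
  have hs' : Summable fun p : Fin M × ℤ => F (finIntEquiv M hM p) :=
    (Equiv.summable_iff (finIntEquiv M hM)).mpr hs
  rw [Summable.tsum_prod' hs' fun b => hs'.prod_factor b, tsum_fintype]
  rw [← Fin.sum_univ_eq_sum_range
    (fun ℓ => g ℓ * Complex.exp (π * I * (ℓ : ℂ) ^ 2 * t / M) * jacobiTheta₂ ((ℓ : ℂ) * t) (M * t)) M]
  refine Finset.sum_congr rfl fun ℓ _ => ?_
  have key : ∀ k : ℤ, F (finIntEquiv M hM (ℓ, k))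
      = (g (ℓ : ℕ) * Complex.exp (π * I * ((ℓ : ℕ) : ℂ) ^ 2 * t / M)) *
          jacobiTheta₂_term k (((ℓ : ℕ) : ℂ) * t) (M * t) := by
    intro k
    simp only [hF, finIntEquiv, Equiv.coe_fn_mk, jacobiTheta₂_term]
    rw [per_int hg _ k, mul_assoc (g ((ℓ : ℕ) : ℤ)), ← Complex.exp_add]
    congr 2
    push_cast
    field_simp
    ring
  simp only [key]
  rw [tsum_mul_left, jacobiTheta₂]

private lemma dft_periodic (M : ℕ) (hM : 0 < M) (f : ℤ → ℂ) :
    ∀ n : ℤ, dft M f (n + M) = dft M f n := by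
  intro n
  unfold dft
  congr 1
  refine Finset.sum_congr rfl fun ℓ _ => ?_
  congr 1
  have hM0 : (M : ℂ) ≠ 0 := Nat.cast_ne_zero.mpr hM.ne'
  rw [Complex.exp_eq_exp_iff_exists_int]
  exact ⟨-(ℓ : ℤ), by push_cast; field_simp; ring⟩

private lemma dft_even (M : ℕ) (hM : 0 < M) (f : ℤ → ℂ)
    (hf : ∀ n : ℤ, f (n + M) = f n) (heven : ∀ n : ℤ, f (-n) = f n) :
    ∀ n : ℤ, dft M f (-n) = dft M f n := by
  intro n
  unfold dft
  congr 1
  have hM0 : (M : ℂ) ≠ 0 := Nat.cast_ne_zero.mpr hM.ne'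
  refine Finset.sum_nbij' (i := fun ℓ => if ℓ = 0 then 0 else M - ℓ)
    (j := fun ℓ => if ℓ = 0 then 0 else M - ℓ) ?_ ?_ ?_ ?_ ?_
  · intro a ha
    simp only [Finset.mem_range] at ha ⊢
    split <;> omega
  · intro a ha
    simp only [Finset.mem_range] at ha ⊢
    split <;> omega
  · intro a ha
    simp only [Finset.mem_range] at ha
    by_cases h : a = 0
    · simp [h]
    · have h2 : M - a ≠ 0 := by omega
      simp only [h, if_false, h2]
      omega
  · intro a ha
    simp only [Finset.mem_range] at ha
    by_cases h : a = 0
    · simp [h]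
    · have h2 : M - a ≠ 0 := by omega
      simp only [h, if_false, h2]
      omega
  · intro a ha
    simp only [Finset.mem_range] at ha
    by_cases h : a = 0
    · simp [h]
    · rw [if_neg h]
      have hcast : ((M - a : ℕ) : ℂ) = (M : ℂ) - a := by
        push_cast [Nat.cast_sub (by omega : a ≤ M)]; ring
      have hfval : f ((M - a : ℕ) : ℤ) = f a := by
        have : ((M - a : ℕ) : ℤ) = -(a : ℤ) + M := by
          push_cast [Nat.cast_sub (by omega : a ≤ M)]; ring
        rw [this, hf, heven]
      rw [hfval, hcast]
      congr 1
      rw [Complex.exp_eq_exp_iff_exists_int]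
      exact ⟨n, by push_cast; field_simp; ring⟩

set_option maxHeartbeats 1000000 in
open Real in
private lemma rhs_tsum (M : ℕ) (hM : 0 < M) (f : ℤ → ℂ) {τ : ℂ} (hτ : 0 < τ.im) (hτ0 : τ ≠ 0) :
    ∑' n : ℤ, dft M f n * Complex.exp (π * I * (n : ℂ) ^ 2 * (-1 / τ) / M)
      = (Real.sqrt M : ℂ)⁻¹ * ∑ ℓ ∈ Finset.range M, f ℓ *
          jacobiTheta₂ ((ℓ : ℂ) / M) (-1 / ((M : ℂ) * τ)) := by
  have hM0 : (M : ℂ) ≠ 0 := Nat.cast_ne_zero.mpr hM.ne'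
  have hu : 0 < (-1 / ((M : ℂ) * τ)).im := by
    rw [div_eq_mul_inv, neg_one_mul, neg_im, inv_im, neg_div, neg_neg]
    have h1 : ((M : ℂ) * τ) ≠ 0 := mul_ne_zero hM0 hτ0
    refine div_pos ?_ (Complex.normSq_pos.mpr h1)
    simp only [mul_im, natCast_re, natCast_im, zero_mul, add_zero]
    exact mul_pos (by exact_mod_cast hM) hτ
  have key : ∀ n : ℤ, dft M f n * Complex.exp (π * I * (n : ℂ) ^ 2 * (-1 / τ) / M)
      = ∑ ℓ ∈ Finset.range M, (Real.sqrt M : ℂ)⁻¹ *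
          (f ℓ * jacobiTheta₂_term n (-((ℓ : ℂ) / M)) (-1 / ((M : ℂ) * τ))) := by
    intro n
    rw [dft, mul_assoc, Finset.sum_mul, Finset.mul_sum]
    refine Finset.sum_congr rfl fun ℓ _ => ?_
    rw [mul_assoc, jacobiTheta₂_term, ← Complex.exp_add]
    congr 2
    field_simp
  rw [tsum_congr key,
    Summable.tsum_finsetSum (f := fun (ℓ : ℕ) (n : ℤ) => (Real.sqrt M : ℂ)⁻¹ *
        (f ℓ * jacobiTheta₂_term n (-((ℓ : ℂ) / M)) (-1 / ((M : ℂ) * τ))))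
      (fun ℓ _ => ((((summable_jacobiTheta₂_term_iff _ _).mpr hu).mul_left _).mul_left _))]
  rw [Finset.mul_sum]
  refine Finset.sum_congr rfl fun ℓ _ => ?_
  rw [tsum_mul_left, tsum_mul_left, ← jacobiTheta₂, jacobiTheta₂_neg_left]

private lemma cpow_fact {τ : ℂ} (hτ0 : τ ≠ 0) (M : ℕ) (hM : 0 < M) :
    1 / (-I * ((M : ℂ) * τ)) ^ (1 / 2 : ℂ)
      = (Real.sqrt M : ℂ)⁻¹ * (τ / I) ^ (-(1 / 2) : ℂ) := by
  have hτI : τ / I ≠ 0 := div_ne_zero hτ0 I_ne_zero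
  have hMr : (0 : ℝ) < M := by exact_mod_cast hM
  have hw : -I * ((M : ℂ) * τ) = (τ / I) * ((M : ℝ) : ℂ) := by
    rw [div_eq_mul_inv, Complex.inv_I]
    push_cast
    ring
  have hsplit : ((τ / I) * ((M : ℝ) : ℂ)) ^ (1 / 2 : ℂ)
      = (τ / I) ^ (1 / 2 : ℂ) * ((M : ℝ) : ℂ) ^ (1 / 2 : ℂ) := by
    rw [cpow_def_of_ne_zero (mul_ne_zero hτI (by exact_mod_cast hMr.ne')),
      Complex.log_mul_ofReal M hMr _ hτI, add_mul, Complex.exp_add,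
      cpow_def_of_ne_zero hτI, cpow_def_of_ne_zero (by exact_mod_cast hMr.ne'),
      Complex.ofReal_log hMr.le]
    ring
  have hMhalf : ((M : ℝ) : ℂ) ^ (1 / 2 : ℂ) = (Real.sqrt M : ℂ) := by
    rw [show (1 / 2 : ℂ) = ((1 / 2 : ℝ) : ℂ) by norm_num,
      ← Complex.ofReal_cpow hMr.le, ← Real.sqrt_eq_rpow]
  rw [hw, hsplit, hMhalf, cpow_neg, one_div, mul_inv, mul_comm]

/-- For an even `M`-periodic `f`, the full theta series
`θ(τ;f) = f(0) + 2Θ(τ;0,f,M)` satisfies the weight 1/2 modularity relation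
`θ(τ;f) = (τ/i)^{-1/2} θ(-1/τ; U_M f)` for all `τ ∈ ℍ`. -/
theorem statement9 (M : ℕ) (hM : 0 < M) (f : ℤ → ℂ)
    (hf : ∀ n : ℤ, f (n + M) = f n) (heven : ∀ n : ℤ, f (-n) = f n)
    (τ : ℂ) (hτ : 0 < τ.im) :
    f 0 + 2 * theta M 0 f τ
      = (τ / Complex.I) ^ (-(1 / 2) : ℂ) *
        (dft M f 0 + 2 * theta M 0 (dft M f) (-1 / τ)) := by
  have hM0 : (M : ℂ) ≠ 0 := Nat.cast_ne_zero.mpr hM.ne'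
  have hτ0 : τ ≠ 0 := by rintro rfl; simp at hτ
  have hs1 := summable_F M hM hf hτ
  have hτ' : 0 < (-1 / τ).im := by
    rw [div_eq_mul_inv, neg_one_mul, neg_im, inv_im, neg_div, neg_neg]
    exact div_pos hτ (Complex.normSq_pos.mpr hτ0)
  have hper' := dft_periodic M hM f
  have heven' := dft_even M hM f hf heven
  have hs2 := summable_F M hM hper' hτ'
  rw [theta_eq_tsum M f heven hs1, theta_eq_tsum M (dft M f) heven' hs2,
    tsum_eq_finsum_theta M hM f hf hs1, rhs_tsum M hM f hτ hτ0]
  rw [Finset.mul_sum, Finset.mul_sum]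
  refine Finset.sum_congr rfl fun ℓ hℓ => ?_
  rw [jacobiTheta₂_functional_equation ((ℓ : ℂ) * τ) ((M : ℂ) * τ)]
  have hz : ((ℓ : ℂ) * τ) / ((M : ℂ) * τ) = (ℓ : ℂ) / (M : ℂ) :=
    mul_div_mul_right _ _ hτ0
  have hexp : Complex.exp (Real.pi * I * (ℓ : ℂ) ^ 2 * τ / M) *
      Complex.exp (-Real.pi * I * ((ℓ : ℂ) * τ) ^ 2 / ((M : ℂ) * τ)) = 1 := by
    rw [← Complex.exp_add, ← Complex.exp_zero]
    congr 1
    field_simp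
    ring
  rw [hz, cpow_fact hτ0 M hM]
  linear_combination ((Real.sqrt M : ℂ))⁻¹ * (τ / I) ^ (-(1 / 2) : ℂ) * f ℓ *
    jacobiTheta₂ ((ℓ : ℂ) / (M : ℂ)) (-1 / ((M : ℂ) * τ)) * hexp
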